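/- Every nice closed curve in the punctured sphere ℙ is not nullhomotopic in ℙ. -/

import Mathlib

open Real ContinuousMap

noncomputable section

abbrev E3 := EuclideanSpace ℝ (Fin 3)

def sphere2 : Set E3 := Metric.sphere 0 1

def eqPt (θ : ℝ) : E3 := (WithLp.equiv 2 _).symm ![Real.cos θ, Real.sin θ, 0]

lemma eqPt_mem_sphere2 (θ : ℝ) : eqPt θ ∈ sphere2 := by
  simp only [sphere2, mem_sphere_iff_norm, sub_zero, eqPt]
  rw [EuclideanSpace.norm_eq]
  simp [Fin.sum_univ_three, PiLp.toLp_apply]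

def puncture (k : ℕ) (j : Fin k) : E3 := eqPt (2 * π * j / k)

def Pset (k : ℕ) : Set E3 := sphere2 \ Set.range (puncture k)

abbrev PSub (k : ℕ) := ↥(Pset k)

def equatorSet (k : ℕ) : Set E3 := {x ∈ Pset k | x 2 = 0}

def arcSide (k : ℕ) (j : Fin k) : Set E3 :=
  {x | ∃ θ : ℝ, 2 * π * j / k < θ ∧ θ < 2 * π * (j + 1) / k ∧ x = eqPt θ}

def hemi : Bool → Set E3
  | true => {x | 0 < x 2}
  | false => {x | x 2 < 0}

structure IsNice (k : ℕ) (γ : C(Circle, PSub k)) (m : ℕ) (t : ℕ → ℝ) (σ : ℕ → Fin k) : Prop where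
  m_pos : 1 ≤ m
  mono : StrictMono t
  t_periodic : ∀ i, t (i + 2 * m) = t i + 2 * π
  σ_periodic : ∀ i, σ (i + 2 * m) = σ i
  preimage : ∀ z : Circle, ((γ z : E3) ∈ equatorSet k) ↔ ∃ i, z = Circle.exp (t i)
  code : ∀ i, ((γ (Circle.exp (t i)) : PSub k) : E3) ∈ arcSide k (σ i)
  adjacent : ∀ i, σ i ≠ σ (i + 1)
  alternate : ∃ b : Bool, ∀ i s, t i < s → s < t (i + 1) →
      ((γ (Circle.exp s) : PSub k) : E3) ∈ hemi (if Even i then b else !b)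

def IsNullCurve {k : ℕ} (γ : C(Circle, PSub k)) : Prop :=
  ∃ x, γ.Homotopic (ContinuousMap.const Circle x)

def NullLoop {X : Type*} [TopologicalSpace X] {x : X} (p : Path x x) : Prop :=
  p.Homotopic (Path.refl x)

def arcPath {X : Type*} [TopologicalSpace X] (δ : C(Circle, X)) (a b : ℝ) :
    Path (δ (Circle.exp a)) (δ (Circle.exp b)) where
  toFun u := δ (Circle.exp (a + u * (b - a)))
  continuous_toFun := by fun_prop
  source' := by simp
  target' := by
    have h : a + (1 : ℝ) * (b - a) = b := by ring
    simp [h]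

def AdmissibleWith (k m : ℕ) (t : ℕ → ℝ) (σ : ℕ → Fin k)
    (γ δ : C(Circle, PSub k)) (s s' : ℕ → ℝ) : Prop :=
  (∀ i, s i ≤ s' i) ∧
  (∀ i, s' i < s (i + 1)) ∧
  (∀ i, s (i + 2 * m) = s i + 2 * π) ∧
  (∀ i, s' (i + 2 * m) = s' i + 2 * π) ∧
  (∀ i, ((δ (Circle.exp (s i)) : PSub k) : E3) ∈ arcSide k (σ i) ∧
        ((δ (Circle.exp (s' i)) : PSub k) : E3) ∈ arcSide k (σ i)) ∧
  (∀ i, ∃ q : Path (δ (Circle.exp (s' i))) (δ (Circle.exp (s i))),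
      (∀ u, ((q u : PSub k) : E3) ∈ arcSide k (σ i)) ∧
      NullLoop ((arcPath δ (s i) (s' i)).trans q)) ∧
  (∀ i, ∃ q₁ : Path (γ (Circle.exp (t (i + 1)))) (δ (Circle.exp (s (i + 1)))),
        ∃ q₂ : Path (δ (Circle.exp (s' i))) (γ (Circle.exp (t i))),
      (∀ u, ((q₁ u : PSub k) : E3) ∈ arcSide k (σ (i + 1))) ∧
      (∀ u, ((q₂ u : PSub k) : E3) ∈ arcSide k (σ i)) ∧
      NullLoop ((arcPath γ (t i) (t (i + 1))).trans
        (q₁.trans (((arcPath δ (s' i) (s (i + 1))).symm).trans q₂))))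

def Admissible (k m : ℕ) (t : ℕ → ℝ) (σ : ℕ → Fin k) (γ δ : C(Circle, PSub k)) : Prop :=
  ∃ s s' : ℕ → ℝ, AdmissibleWith k m t σ γ δ s s'




namespace NiceComb

variable {k : ℕ}

abbrev Col (k : ℕ) := Bool ⊕ Fin k
abbrev V (k : ℕ) := Bool × List (Fin k)

def hem (b : Bool) (w : List (Fin k)) : Bool := if Even w.length then !b else b

def piV (b : Bool) : V k → Col k
  | (true, w) => .inl (hem b w)
  | (false, []) => .inl true
  | (false, j :: _) => .inr j

def st (b : Bool) : V k → Col k → V k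
  | (true, w), .inl _ => (true, w)
  | (true, w), .inr j => if w.head? = some j then (false, w) else (false, j :: w)
  | (false, w), .inr _ => (false, w)
  | (false, []), .inl _ => (true, [])
  | (false, j :: r), .inl h => if h = hem b (j :: r) then (true, j :: r) else (true, r)

def Honest : V k → Prop := fun v => (v.1 = false → v.2 ≠ []) ∧ v.2.Chain' (· ≠ ·)

def REL (b : Bool) (v v' : V k) : Prop :=
  v' = st b v (piV b v') ∧ v = st b v' (piV b v)

@[simp] lemma piV_t (b : Bool) (w : List (Fin k)) : piV b (true, w) = .inl (hem b w) := by
  rcases w with _ | ⟨j, r⟩ <;> rfl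

@[simp] lemma piV_f (b : Bool) (j : Fin k) (r : List (Fin k)) :
    piV b (false, j :: r) = .inr j := rfl

@[simp] lemma st_t_inl (b : Bool) (w : List (Fin k)) (h : Bool) :
    st b (true, w) (.inl h) = (true, w) := by
  rcases w with _ | ⟨j, r⟩ <;> rfl

@[simp] lemma st_t_inr (b : Bool) (w : List (Fin k)) (j : Fin k) :
    st b (true, w) (.inr j) = if w.head? = some j then (false, w) else (false, j :: w) := by
  rcases w with _ | ⟨a, r⟩ <;> rfl

@[simp] lemma st_f_inr (b : Bool) (w : List (Fin k)) (j : Fin k) :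
    st b (false, w) (.inr j) = (false, w) := by
  rcases w with _ | ⟨a, r⟩ <;> rfl

@[simp] lemma st_f_inl (b : Bool) (j : Fin k) (r : List (Fin k)) (h : Bool) :
    st b (false, j :: r) (.inl h) =
      if h = hem b (j :: r) then (true, j :: r) else (true, r) := rfl

lemma hem_cons (b : Bool) (j : Fin k) (r : List (Fin k)) :
    hem b (j :: r) = !(hem b r) := by
  rcases Nat.even_or_odd r.length with h | h
  · simp [hem, h, Nat.even_add_one, Nat.not_even_iff_odd]
  · simp [hem, h, Nat.even_add_one, Nat.not_even_iff_odd, Nat.not_even_iff_odd.mpr h]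

lemma rel_symm {b : Bool} {v v' : V k} (h : REL b v v') : REL b v' v := ⟨h.2, h.1⟩

lemma honest_st {b : Bool} {v : V k} {c : Col k} (hv : Honest v) : Honest (st b v c) := by
  obtain ⟨f, w⟩ := v
  rcases c with h | j
  · cases f
    · rcases w with _ | ⟨j, r⟩
      · exact ⟨by simp [st], List.isChain_nil⟩
      · rw [st_f_inl]
        split
        · exact ⟨by simp, hv.2⟩
        · exact ⟨by simp, (List.isChain_cons.mp hv.2).2⟩
    · rw [st_t_inl]; exact hv
  · cases f
    · rw [st_f_inr]; exact hv
    · rw [st_t_inr]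
      split
      · rename_i he
        refine ⟨fun _ => ?_, hv.2⟩
        rcases w with _ | ⟨a, r⟩ <;> simp_all
      · rename_i hne
        refine ⟨by simp, List.isChain_cons.mpr ⟨?_, hv.2⟩⟩
        intro y hy hjy
        apply hne
        rcases w with _ | ⟨a, r⟩ <;> simp_all

lemma st_piV {b : Bool} {v : V k} (hv : Honest v) : st b v (piV b v) = v := by
  obtain ⟨f, w⟩ := v
  cases f
  · rcases w with _ | ⟨j, r⟩
    · exact absurd rfl (hv.1 rfl)
    · rfl
  · rw [piV_t, st_t_inl]

lemma rel_refl {b : Bool} {v : V k} (hv : Honest v) : REL b v v :=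
  ⟨(st_piV hv).symm, (st_piV hv).symm⟩

section CP

variable (b : Bool) {cp : Col k → Col k → Prop}
variable (cpl : ∀ h h', cp (.inl h) (.inl h') → h = h')
variable (cpr : ∀ j j', cp (.inr j) (.inr j') → j = j')

include cpl cpr

lemma piV_st {v : V k} {c : Col k} (hv : Honest v) (hc : cp (piV b v) c) :
    piV b (st b v c) = c := by
  obtain ⟨f, w⟩ := v
  cases f
  · rcases w with _ | ⟨j, r⟩
    · exact absurd rfl (hv.1 rfl)
    · rcases c with h | j'
      · rw [st_f_inl]
        split
        · rename_i he
          rw [piV_t, he]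
        · rename_i he
          rw [piV_t]
          congr 1
          have h2 := hem_cons b j r
          cases h <;> cases hb : hem b r <;> simp_all
      · rw [piV_f] at hc
        have := cpr _ _ hc
        subst this
        rw [st_f_inr, piV_f]
  · rcases c with h | j
    · rw [piV_t] at hc
      have := cpl _ _ hc
      subst this
      rw [st_t_inl, piV_t]
    · rw [st_t_inr]
      split
      · rename_i he
        rcases w with _ | ⟨a, r⟩
        · simp at he
        · simp at he
          subst he
          rfl
      · rfl

lemma back {v : V k} {c : Col k} (hv : Honest v) (hc : cp (piV b v) c) :
    REL b v (st b v c) := by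
  constructor
  · rw [piV_st b cpl cpr hv hc]
  · obtain ⟨f, w⟩ := v
    cases f
    · rcases w with _ | ⟨j, r⟩
      · exact absurd rfl (hv.1 rfl)
      · rcases c with h | j'
        · rw [st_f_inl]
          split
          · rw [piV_f, st_t_inr]
            simp
          · rw [piV_f, st_t_inr]
            have hne : r.head? ≠ some j := by
              rcases r with _ | ⟨a, r'⟩
              · simp
              · have h3 : j ≠ a := (List.isChain_cons_cons.mp hv.2).1
                intro hcon
                simp only [List.head?_cons, Option.some.injEq] at hcon
                exact h3 hcon.symm
            simp [hne]
        · rw [piV_f] at hc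
          have := cpr _ _ hc
          subst this
          rw [st_f_inr, piV_f, st_f_inr]
    · rcases c with h | j
      · rw [piV_t] at hc
        have := cpl _ _ hc
        subst this
        rw [st_t_inl, piV_t, st_t_inl]
      · rw [st_t_inr]
        split
        · rename_i he
          rcases w with _ | ⟨a, r⟩
          · simp at he
          · simp at he
            subst he
            rw [piV_t, st_f_inl]
            simp
        · rename_i he
          rw [piV_t, st_f_inl]
          have hne : hem b w ≠ hem b (j :: w) := by
            rw [hem_cons]
            cases hem b w <;> simp
          simp [hne]

lemma trans_st {v : V k} {a a' : Col k} (hv : Honest v) (ha : cp (piV b v) a)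
    (ha' : cp (piV b v) a') (haa' : cp a a') :
    st b (st b v a) a' = st b v a' := by
  by_cases h1 : a' = a
  · subst h1
    have h2 : piV b (st b v a') = a' := piV_st b cpl cpr hv ha
    have h4 := st_piV (b := b) (v := st b v a') (honest_st hv)
    rwa [h2] at h4
  · by_cases h3 : a = piV b v
    · subst h3
      rw [st_piV hv]
    by_cases h2 : a' = piV b v
    · subst h2
      rw [← (back b cpl cpr hv ha).2, st_piV hv]
    · exfalso
      rcases a with h | j <;> rcases a' with h' | j'
      · exact h1 (by rw [cpl _ _ haa'])
      · rcases hpi : piV b v with hh | jj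
        · rw [hpi] at ha
          exact h3 (by rw [hpi, cpl _ _ ha])
        · rw [hpi] at ha'
          exact h2 (by rw [hpi, cpr _ _ ha'])
      · rcases hpi : piV b v with hh | jj
        · rw [hpi] at ha'
          exact h2 (by rw [hpi, cpl _ _ ha'])
        · rw [hpi] at ha
          exact h3 (by rw [hpi, cpr _ _ ha])
      · exact h1 (by rw [cpr _ _ haa'])


lemma step_eq {v : V k} {d d' : Col k} (hv : Honest v)
    (hcd : cp (piV b v) d) (hcd' : cp (piV b v) d') (hdd' : cp d d') :
    REL b (st b v d) (st b v d') := by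
  by_cases h1 : d = piV b v
  · rw [h1, st_piV hv]
    by_cases h2 : d' = piV b v
    · rw [h2, st_piV hv]
      exact rel_refl hv
    · exact back b cpl cpr hv hcd'
  · by_cases h2 : d' = piV b v
    · rw [h2, st_piV hv]
      exact rel_symm (back b cpl cpr hv hcd)
    · have hdd : d = d' := by
        rcases hpv : piV b v with hh | jj
        · rcases d with h | j
          · have h3 : h = hh := (cpl _ _ (hpv ▸ hcd)).symm
            exact absurd (by rw [hpv, h3]) h1
          · rcases d' with h' | j'
            · have h3 : h' = hh := (cpl _ _ (hpv ▸ hcd')).symm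
              exact absurd (by rw [hpv, h3]) h2
            · rw [cpr _ _ hdd']
        · rcases d with h | j
          · rcases d' with h' | j'
            · rw [cpl _ _ hdd']
            · have h3 : j' = jj := (cpr _ _ (hpv ▸ hcd')).symm
              exact absurd (by rw [hpv, h3]) h2
          · have h3 : j = jj := (cpr _ _ (hpv ▸ hcd)).symm
            exact absurd (by rw [hpv, h3]) h1
      rw [hdd]
      exact rel_refl (honest_st hv)

lemma step_mix {w : List (Fin k)} {j' : Fin k} {r' : List (Fin k)} {d d' : Col k}
    (hv : Honest ((true, w) : V k)) (hv' : Honest ((false, j' :: r') : V k))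
    (hrel : REL b (true, w) (false, j' :: r'))
    (h1 : cp (piV b (true, w)) d) (h2 : cp (piV b (true, w)) d')
    (h3 : cp (piV b ((false, j' :: r') : V k)) d)
    (h4 : cp (piV b ((false, j' :: r') : V k)) d') :
    REL b (st b (true, w) d) (st b (false, j' :: r') d') := by
  have e1 : st b (true, w) d = (true, w) ∨ st b (true, w) d = (false, j' :: r') := by
    rcases d with h | j
    · left
      rw [st_t_inl]
    · right
      have hj : j' = j := cpr _ _ (by rwa [piV_f] at h3)
      subst hj
      have h5 := hrel.1
      rw [piV_f] at h5
      exact h5.symm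
  have e2 : st b (false, j' :: r') d' = (false, j' :: r') ∨
      st b (false, j' :: r') d' = (true, w) := by
    rcases d' with h | j
    · right
      have hh : hem b w = h := cpl _ _ (by rwa [piV_t] at h2)
      have h5 := hrel.2
      rw [piV_t, hh] at h5
      exact h5.symm
    · left
      rw [st_f_inr]
  rcases e1 with e1 | e1 <;> rcases e2 with e2 | e2 <;> rw [e1, e2]
  · exact hrel
  · exact rel_refl hv
  · exact rel_refl hv'
  · exact rel_symm hrel

lemma step {v v' : V k} {d d' : Col k} (hv : Honest v) (hv' : Honest v')
    (hrel : REL b v v')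
    (hcd : cp (piV b v) d) (hcd' : cp (piV b v) d')
    (hc'd : cp (piV b v') d) (hc'd' : cp (piV b v') d')
    (hdd' : cp d d') :
    REL b (st b v d) (st b v' d') := by
  obtain ⟨f, w⟩ := v
  obtain ⟨f', w'⟩ := v'
  cases f <;> cases f'
  · -- both false
    have hvv : ((false, w') : V k) = (false, w) := by
      rcases w' with _ | ⟨a, r⟩
      · exact absurd rfl (hv'.1 rfl)
      · have h5 := hrel.1
        rw [piV_f, st_f_inr] at h5
        exact h5
    rw [hvv] at hc'd' ⊢
    exact step_eq b cpl cpr hv hcd hc'd' hdd'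
  · -- v false, v' true
    rcases w with _ | ⟨a, r⟩
    · exact absurd rfl (hv.1 rfl)
    · exact rel_symm (step_mix b cpl cpr hv' hv (rel_symm hrel) hc'd' hc'd hcd' hcd)
  · -- v true, v' false
    rcases w' with _ | ⟨a, r⟩
    · exact absurd rfl (hv'.1 rfl)
    · exact step_mix b cpl cpr hv hv' hrel hcd hcd' hc'd hc'd'
  · -- both true
    have hvv : ((true, w') : V k) = (true, w) := by
      have h5 := hrel.1
      rw [piV_t, st_t_inl] at h5
      exact h5
    rw [hvv] at hc'd' ⊢
    exact step_eq b cpl cpr hv hcd hc'd' hdd'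

end CP

end NiceComb

namespace NiceGeo

/-- angle of the n-th meridian -/
def ang (k n : ℕ) : ℝ := 2 * π * n / k

/-- cross product with direction α -/
def cr (α : ℝ) (x : E3) : ℝ := x 0 * Real.sin α - x 1 * Real.cos α

@[simp] lemma eqPt_apply0 (θ : ℝ) : eqPt θ 0 = Real.cos θ := by
  simp [eqPt, PiLp.toLp_apply]

@[simp] lemma eqPt_apply1 (θ : ℝ) : eqPt θ 1 = Real.sin θ := by
  simp [eqPt, PiLp.toLp_apply]

@[simp] lemma eqPt_apply2 (θ : ℝ) : eqPt θ 2 = 0 := by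
  simp [eqPt, PiLp.toLp_apply]

lemma sum_sq_of_sphere {x : E3} (h : x ∈ sphere2) : x 0 ^ 2 + x 1 ^ 2 + x 2 ^ 2 = 1 := by
  simp only [sphere2, Metric.mem_sphere, dist_zero_right] at h
  have h2 : ‖x‖ ^ 2 = 1 := by rw [h]; norm_num
  rw [EuclideanSpace.norm_eq] at h2
  rw [Real.sq_sqrt (by positivity)] at h2
  simpa [Fin.sum_univ_three, sq_abs] using h2

lemma cr_eq {ρ θ : ℝ} {x : E3} (α : ℝ) (h0 : x 0 = ρ * Real.cos θ)
    (h1 : x 1 = ρ * Real.sin θ) : cr α x = -(ρ * Real.sin (θ - α)) := by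
  simp only [cr, h0, h1, Real.sin_sub]
  ring

lemma sin_nonpos_neg {x : ℝ} (h1 : -π ≤ x) (h2 : x ≤ 0) : Real.sin x ≤ 0 := by
  have := Real.sin_nonneg_of_nonneg_of_le_pi (x := -x) (by linarith) (by linarith)
  simp only [Real.sin_neg] at this
  linarith

lemma sin_nonpos_big {x : ℝ} (h1 : π ≤ x) (h2 : x ≤ 2 * π) : Real.sin x ≤ 0 := by
  have h3 := Real.sin_nonneg_of_nonneg_of_le_pi (x := x - π) (by linarith) (by linarith)
  rw [Real.sin_sub_pi] at h3
  linarith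

lemma sin_nonneg_low {x : ℝ} (h1 : -2*π ≤ x) (h2 : x ≤ -π) : 0 ≤ Real.sin x := by
  have h3 := Real.sin_nonneg_of_nonneg_of_le_pi (x := x + 2*π) (by linarith) (by linarith)
  rwa [Real.sin_add_two_pi] at h3

/-- localization of an angle from the two sine sign conditions -/
lemma sinloc {θ α g : ℝ} (hg0 : 0 < g) (hgπ : g < π)
    (h0 : 0 ≤ θ) (h1 : θ < 2*π) (h2 : 0 ≤ α) (h3 : α + g ≤ 2*π)
    (hs1 : 0 < Real.sin (θ - α)) (hs2 : Real.sin (θ - (α + g)) < 0) :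
    α < θ ∧ θ < α + g := by
  have hπ : 0 < π := Real.pi_pos
  have hstep1 : 0 < θ - α := by
    by_contra hA
    push_neg at hA
    by_cases hB : -π ≤ θ - α
    · exact absurd hs1 (not_lt.mpr (sin_nonpos_neg hB hA))
    · push_neg at hB
      have h4 : 0 ≤ Real.sin (θ - (α + g)) :=
        sin_nonneg_low (by linarith) (by linarith)
      linarith
  refine ⟨by linarith, ?_⟩
  by_contra hC
  push_neg at hC
  -- θ - (α+g) ≥ 0
  have h5 : Real.sin (θ - (α + g)) ≤ 0 := le_of_lt hs2
  have h6 : π < θ - (α + g) := by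
    by_contra hD
    push_neg at hD
    have := Real.sin_nonneg_of_nonneg_of_le_pi (x := θ - (α + g)) (by linarith) hD
    linarith
  have h7 : Real.sin (θ - α) ≤ 0 := sin_nonpos_big (by linarith) (by linarith)
  linarith

/-- extract polar coordinates -/
lemma extract {x0 x1 : ℝ} (h : 0 < x0^2 + x1^2) :
    ∃ θ, 0 ≤ θ ∧ θ < 2*π ∧ x0 = Real.sqrt (x0^2 + x1^2) * Real.cos θ ∧
      x1 = Real.sqrt (x0^2 + x1^2) * Real.sin θ := by
  set ρ := Real.sqrt (x0^2 + x1^2) with hρdef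
  have hρ : 0 < ρ := Real.sqrt_pos.mpr h
  have hρsq : ρ^2 = x0^2 + x1^2 := Real.sq_sqrt (le_of_lt h)
  set y0 := x0 / ρ with hy0
  set y1 := x1 / ρ with hy1
  have hysq : y0^2 + y1^2 = 1 := by
    rw [hy0, hy1, div_pow, div_pow, ← add_div, ← hρsq]
    exact div_self (pow_ne_zero 2 hρ.ne')
  have hy0le : -1 ≤ y0 ∧ y0 ≤ 1 := by
    constructor <;> nlinarith [sq_nonneg y1, sq_nonneg (y0 - 1), sq_nonneg (y0 + 1)]
  have hcos : Real.cos (Real.arccos y0) = y0 := Real.cos_arccos hy0le.1 hy0le.2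
  have hsin : Real.sin (Real.arccos y0) = Real.sqrt (1 - y0^2) := Real.sin_arccos y0
  have hs1 : Real.sqrt (1 - y0^2) = |y1| := by
    rw [show (1 : ℝ) - y0^2 = y1^2 by linarith]
    exact Real.sqrt_sq_eq_abs y1
  have har1 : 0 ≤ Real.arccos y0 := Real.arccos_nonneg y0
  have har2 : Real.arccos y0 ≤ π := Real.arccos_le_pi y0
  have hπ := Real.pi_pos
  rcases le_or_gt 0 x1 with hx1 | hx1
  · refine ⟨Real.arccos y0, har1, by linarith, ?_, ?_⟩
    · rw [hcos, hy0]; field_simp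
    · rw [hsin, hs1, abs_of_nonneg (by positivity : (0:ℝ) ≤ y1)]
      rw [hy1]; field_simp
  · have hy1neg : y1 < 0 := div_neg_of_neg_of_pos hx1 hρ
    have hy0lt : y0 < 1 := by nlinarith
    have hapos : 0 < Real.arccos y0 := Real.arccos_pos.mpr hy0lt
    refine ⟨2*π - Real.arccos y0, by linarith, by linarith, ?_, ?_⟩
    · have : Real.cos (2*π - Real.arccos y0) = y0 := by
        rw [show 2*π - Real.arccos y0 = -(Real.arccos y0) + 2*π by ring,
          Real.cos_add_two_pi, Real.cos_neg, hcos]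
      rw [this, hy0]; field_simp
    · have : Real.sin (2*π - Real.arccos y0) = -|y1| := by
        rw [show 2*π - Real.arccos y0 = -(Real.arccos y0) + 2*π by ring,
          Real.sin_add_two_pi, Real.sin_neg, hsin, hs1]
      rw [this, abs_of_neg hy1neg, hy1]; field_simp


variable {k : ℕ}

def OC (k : ℕ) : Bool ⊕ Fin k → Set (PSub k)
  | .inl h => {x | (x : E3) ∈ hemi h}
  | .inr j => {x | cr (ang k j.val) (x : E3) < 0 ∧ 0 < cr (ang k (j.val + 1)) (x : E3)}

lemma continuous_coord (i : Fin 3) : Continuous fun x : PSub k => (x : E3) i :=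
  (EuclideanSpace.proj i).continuous.comp continuous_subtype_val

lemma continuous_cr (α : ℝ) : Continuous fun x : PSub k => cr α (x : E3) := by
  unfold cr
  exact ((continuous_coord 0).mul continuous_const).sub
    ((continuous_coord 1).mul continuous_const)

lemma mem_hemi_true {x : E3} : x ∈ hemi true ↔ 0 < x 2 := Iff.rfl
lemma mem_hemi_false {x : E3} : x ∈ hemi false ↔ x 2 < 0 := Iff.rfl

lemma isOpen_OC (c : Bool ⊕ Fin k) : IsOpen (OC k c) := by
  rcases c with h | j
  · cases h
    · exact isOpen_lt (continuous_coord 2) continuous_const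
    · exact isOpen_lt continuous_const (continuous_coord 2)
  · exact (isOpen_lt (continuous_cr _) continuous_const).inter
      (isOpen_lt continuous_const (continuous_cr _))

lemma kpos (hk : 3 ≤ k) : (0:ℝ) < k := by
  have : (3:ℝ) ≤ k := by exact_mod_cast hk
  linarith

lemma ang_nonneg (hk : 3 ≤ k) (n : ℕ) : 0 ≤ ang k n := by
  have := kpos hk
  have := Real.pi_pos
  have : (0:ℝ) ≤ n := Nat.cast_nonneg n
  unfold ang
  positivity

lemma ang_succ (hk : 3 ≤ k) (n : ℕ) : ang k (n+1) = ang k n + 2*π/k := by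
  have h0 := kpos hk
  unfold ang
  push_cast
  field_simp

lemma ang_le_two_pi (hk : 3 ≤ k) {n : ℕ} (h : n ≤ k) : ang k n ≤ 2*π := by
  have h0 := kpos hk
  have hπ := Real.pi_pos
  unfold ang
  rw [div_le_iff₀ h0]
  have : (n:ℝ) ≤ k := by exact_mod_cast h
  nlinarith

lemma ang_lt_ang (hk : 3 ≤ k) {a c : ℕ} (h : ang k a < ang k c) : a < c := by
  have h0 := kpos hk
  have hπ := Real.pi_pos
  unfold ang at h
  rw [div_lt_div_iff_of_pos_right h0] at h
  have : (a:ℝ) < c := by nlinarith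
  exact_mod_cast this

lemma two_pi_div_pos (hk : 3 ≤ k) : 0 < 2*π/k := by
  have := kpos hk; have := Real.pi_pos; positivity

lemma two_pi_div_lt_pi (hk : 3 ≤ k) : 2*π/k < π := by
  have h0 := kpos hk
  have hπ := Real.pi_pos
  rw [div_lt_iff₀ h0]
  have : (3:ℝ) ≤ k := by exact_mod_cast hk
  nlinarith

lemma mem_lune_of_rep (hk : 3 ≤ k) (j : Fin k) {x : PSub k} {ρ θ : ℝ} (hρ : 0 < ρ)
    (h1 : ang k j.val < θ) (h2 : θ < ang k (j.val + 1))
    (hx0 : (x : E3) 0 = ρ * Real.cos θ) (hx1 : (x : E3) 1 = ρ * Real.sin θ) :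
    x ∈ OC k (.inr j) := by
  have hgap := ang_succ hk j.val
  have hπ := two_pi_div_lt_pi hk
  constructor
  · rw [cr_eq (ang k j.val) hx0 hx1]
    have hs : 0 < Real.sin (θ - ang k j.val) :=
      Real.sin_pos_of_pos_of_lt_pi (by linarith) (by linarith)
    nlinarith
  · rw [cr_eq (ang k (j.val + 1)) hx0 hx1]
    have hs : 0 < Real.sin (ang k (j.val+1) - θ) :=
      Real.sin_pos_of_pos_of_lt_pi (by linarith) (by linarith)
    have hs2 : Real.sin (θ - ang k (j.val+1)) < 0 := by
      rw [show θ - ang k (j.val+1) = -(ang k (j.val+1) - θ) by ring, Real.sin_neg]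
      linarith
    nlinarith

lemma lune_pos {x : PSub k} {j : Fin k} (hx : x ∈ OC k (.inr j)) :
    0 < (x : E3) 0 ^ 2 + (x : E3) 1 ^ 2 := by
  rcases hx with ⟨h1, h2⟩
  by_contra hcon
  push_neg at hcon
  have e0 : (x : E3) 0 = 0 := by nlinarith [sq_nonneg ((x:E3) 0), sq_nonneg ((x:E3) 1)]
  have e1 : (x : E3) 1 = 0 := by nlinarith [sq_nonneg ((x:E3) 0), sq_nonneg ((x:E3) 1)]
  rw [cr, e0, e1] at h1
  simp at h1

lemma lune_loc (hk : 3 ≤ k) {x : PSub k} {j : Fin k} {θ ρ : ℝ} (hρ : 0 < ρ)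
    (h0 : 0 ≤ θ) (h1 : θ < 2*π)
    (hx0 : (x : E3) 0 = ρ * Real.cos θ) (hx1 : (x : E3) 1 = ρ * Real.sin θ)
    (hx : x ∈ OC k (.inr j)) : ang k j.val < θ ∧ θ < ang k (j.val + 1) := by
  rcases hx with ⟨hc1, hc2⟩
  rw [cr_eq (ang k j.val) hx0 hx1] at hc1
  rw [cr_eq (ang k (j.val+1)) hx0 hx1] at hc2
  have hs1 : 0 < Real.sin (θ - ang k j.val) := by nlinarith
  have hs2 : Real.sin (θ - ang k (j.val + 1)) < 0 := by nlinarith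
  rw [ang_succ hk j.val] at hc2 hs2 ⊢
  have hj1 : j.val + 1 ≤ k := j.isLt
  have hle : ang k j.val + 2*π/k ≤ 2*π := by
    rw [← ang_succ hk j.val]
    exact ang_le_two_pi hk hj1
  exact sinloc (two_pi_div_pos hk) (two_pi_div_lt_pi hk) h0 h1
    (ang_nonneg hk j.val) hle hs1 hs2

lemma lune_disjoint (hk : 3 ≤ k) {j j' : Fin k} {x : PSub k}
    (h : x ∈ OC k (.inr j)) (h' : x ∈ OC k (.inr j')) : j = j' := by
  have hpos := lune_pos h
  obtain ⟨θ, h0, h1, hx0, hx1⟩ := extract hpos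
  have hρ : 0 < Real.sqrt ((x:E3) 0 ^ 2 + (x:E3) 1 ^ 2) := Real.sqrt_pos.mpr hpos
  have l1 := lune_loc hk hρ h0 h1 hx0 hx1 h
  have l2 := lune_loc hk hρ h0 h1 hx0 hx1 h'
  have e1 : j.val < j'.val + 1 := ang_lt_ang hk (lt_trans l1.1 l2.2)
  have e2 : j'.val < j.val + 1 := ang_lt_ang hk (lt_trans l2.1 l1.2)
  exact Fin.ext (by omega)

lemma hemi_disjoint {h h' : Bool} {x : PSub k} (m1 : x ∈ OC k (.inl h))
    (m2 : x ∈ OC k (.inl h')) : h = h' := by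
  cases h <;> cases h' <;> try rfl
  · exact absurd (lt_trans (mem_hemi_false.mp m1) (mem_hemi_true.mp m2)) (lt_irrefl _)
  · exact absurd (lt_trans (mem_hemi_false.mp m2) (mem_hemi_true.mp m1)) (lt_irrefl _)

lemma arc_coord2 {j : Fin k} {x : E3} (hx : x ∈ arcSide k j) : x 2 = 0 := by
  obtain ⟨θ, _, _, rfl⟩ := hx
  simp

lemma arc_lune (hk : 3 ≤ k) {j : Fin k} {x : PSub k} (hx : (x : E3) ∈ arcSide k j) :
    x ∈ OC k (.inr j) := by
  obtain ⟨θ, hθ1, hθ2, hxe⟩ := hx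
  have ha1 : ang k j.val < θ := by
    unfold ang
    convert hθ1 using 2
  have ha2 : θ < ang k (j.val + 1) := by
    unfold ang
    convert hθ2 using 2
    push_cast
    ring
  refine mem_lune_of_rep hk j one_pos ha1 ha2 ?_ ?_
  · rw [hxe]; simp
  · rw [hxe]; simp

lemma arc_color (hk : 3 ≤ k) {j : Fin k} {x : PSub k} (hx : (x : E3) ∈ arcSide k j)
    (c : Bool ⊕ Fin k) (hc : x ∈ OC k c) : c = .inr j := by
  rcases c with h | j'
  · exfalso
    have h2 := arc_coord2 hx
    cases h
    · exact absurd (mem_hemi_false.mp hc) (by rw [h2]; exact lt_irrefl 0)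
    · exact absurd (mem_hemi_true.mp hc) (by rw [h2]; exact lt_irrefl 0)
  · rw [lune_disjoint hk hc (arc_lune hk hx)]

lemma hemi_color {hb h' : Bool} {x : PSub k} (hx : (x : E3) ∈ hemi hb)
    (hc : x ∈ OC k (.inl h')) : h' = hb :=
  hemi_disjoint hc hx

lemma cover (hk : 3 ≤ k) (x : PSub k) : ∃ c, x ∈ OC k c := by
  rcases lt_trichotomy ((x : E3) 2) 0 with h | h | h
  · exact ⟨.inl false, h⟩
  · have hsum : (x:E3) 0 ^ 2 + (x:E3) 1 ^ 2 = 1 := by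
      have := sum_sq_of_sphere x.2.1
      rw [h] at this
      linarith
    have hpos : 0 < (x:E3) 0 ^ 2 + (x:E3) 1 ^ 2 := by rw [hsum]; norm_num
    obtain ⟨θ, h0, h1, hx0, hx1⟩ := extract hpos
    rw [hsum, Real.sqrt_one, one_mul] at hx0 hx1
    have hπ := Real.pi_pos
    have hkR := kpos hk
    set n := ⌊θ * k / (2*π)⌋₊ with hn
    have harg : 0 ≤ θ * k / (2*π) := by positivity
    have hnk : n < k := by
      rw [hn]
      apply Nat.floor_lt harg |>.mpr
      rw [div_lt_iff₀ (by linarith)]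
      nlinarith
    have hlow : ang k n ≤ θ := by
      have h2 := Nat.floor_le harg
      rw [← hn] at h2
      unfold ang
      rw [div_le_iff₀ hkR]
      calc 2*π*n = (n:ℝ) * (2*π) := by ring
      _ ≤ (θ * k / (2*π)) * (2*π) := by
          apply mul_le_mul_of_nonneg_right h2 (by linarith)
      _ = θ * k := by field_simp
    have hhigh : θ < ang k (n+1) := by
      have h2 := Nat.lt_floor_add_one (θ * k / (2*π))
      rw [← hn] at h2
      unfold ang
      rw [lt_div_iff₀ hkR]
      push_cast
      rw [div_lt_iff₀ (by linarith : (0:ℝ) < 2*π)] at h2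
      nlinarith
    have hne : ang k n ≠ θ := by
      intro he
      apply x.2.2
      refine ⟨⟨n, hnk⟩, ?_⟩
      have : (x : E3) = eqPt (ang k n) := by
        apply PiLp.ext
        intro i
        fin_cases i
        · show (x : E3) 0 = eqPt (ang k n) 0
          rw [eqPt_apply0, he]
          exact hx0
        · show (x : E3) 1 = eqPt (ang k n) 1
          rw [eqPt_apply1, he]
          exact hx1
        · show (x : E3) 2 = eqPt (ang k n) 2
          rw [eqPt_apply2, h]
      rw [puncture, this]
      congr 1
    refine ⟨.inr ⟨n, hnk⟩, mem_lune_of_rep hk ⟨n, hnk⟩ one_pos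
      (lt_of_le_of_ne hlow hne) hhigh (by rw [one_mul, hx0]) (by rw [one_mul, hx1])⟩
  · exact ⟨.inl true, h⟩

end NiceGeo


namespace NiceGlue

open NiceComb NiceGeo

def natIter {α : Type*} (f : ℕ → α → α) (a : α) : ℕ → α
  | 0 => a
  | n+1 => f n (natIter f a n)

@[simp] lemma natIter_zero {α : Type*} (f : ℕ → α → α) (a : α) : natIter f a 0 = a := rfl

@[simp] lemma natIter_succ {α : Type*} (f : ℕ → α → α) (a : α) (n : ℕ) :
    natIter f a (n+1) = f n (natIter f a n) := rfl

def Wlist {k : ℕ} (σ : ℕ → Fin k) : ℕ → List (Fin k)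
  | 0 => [σ 0]
  | i+1 => σ (i+1) :: Wlist σ i

@[simp] lemma Wlist_len {k : ℕ} (σ : ℕ → Fin k) (i : ℕ) : (Wlist σ i).length = i + 1 := by
  induction i with
  | zero => rfl
  | succ n ih => simp [Wlist, ih]

lemma Wlist_cons {k : ℕ} (σ : ℕ → Fin k) (i : ℕ) : ∃ w, Wlist σ i = σ i :: w := by
  cases i with
  | zero => exact ⟨[], rfl⟩
  | succ n => exact ⟨Wlist σ n, rfl⟩

def upFun (t : ℕ → ℝ) (R : ℕ) (n : ℕ) : ℝ :=
  t (n / R) + ((n % R : ℕ) : ℝ) * (t (n / R + 1) - t (n / R)) / ((R : ℕ) : ℝ)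

lemma upFun_left (t : ℕ → ℝ) {R : ℕ} (hR : 0 < R) (i : ℕ) : upFun t R (i * R) = t i := by
  unfold upFun
  rw [Nat.mul_div_cancel _ hR, Nat.mul_mod_left]
  simp

lemma upFun_succ (t : ℕ → ℝ) {R : ℕ} (hR : 0 < R) (l : ℕ) :
    upFun t R (l + 1) = upFun t R l + (t (l / R + 1) - t (l / R)) / R := by
  have hl := Nat.div_add_mod l R
  have hr : l % R < R := Nat.mod_lt l hR
  have hRne : (R : ℝ) ≠ 0 := by positivity
  have hRpos : (0:ℝ) < R := by exact_mod_cast hR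
  rcases eq_or_lt_of_le (Nat.succ_le_of_lt hr) with he | hlt
  · have h1 : l + 1 = (l / R + 1) * R := by
      have h2 : (l / R + 1) * R = R * (l / R) + R := by ring
      rw [h2]
      conv_lhs => rw [← hl]
      rw [Nat.add_assoc]
      congr 1
    have hdiv : (l + 1) / R = l / R + 1 := by rw [h1, Nat.mul_div_cancel _ hR]
    have hmod : (l + 1) % R = 0 := by rw [h1]; exact Nat.mul_mod_left _ _
    unfold upFun
    rw [hdiv, hmod]
    have hrR : ((l % R : ℕ) : ℝ) + 1 = (R : ℝ) := by exact_mod_cast congrArg Nat.cast he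
    have e1 : ((l % R : ℕ) : ℝ) * (t (l / R + 1) - t (l / R)) / R
        + (t (l / R + 1) - t (l / R)) / R = t (l / R + 1) - t (l / R) := by
      rw [← add_div]
      rw [div_eq_iff hRne]
      linear_combination (t (l / R + 1) - t (l / R)) * hrR
    push_cast
    linear_combination -e1
  · have h1 : l + 1 = (l % R + 1) + R * (l / R) := by omega
    have hdiv : (l + 1) / R = l / R := by
      rw [h1, Nat.add_mul_div_left _ _ hR, Nat.div_eq_of_lt hlt, Nat.zero_add]
    have hmod : (l + 1) % R = l % R + 1 := by
      rw [h1, Nat.add_mul_mod_self_left, Nat.mod_eq_of_lt hlt]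
    unfold upFun
    rw [hdiv, hmod]
    push_cast
    field_simp
    ring

lemma upFun_ge (t : ℕ → ℝ) {R : ℕ} (hR : 0 < R) (hmono : StrictMono t) (l : ℕ) :
    t (l / R) ≤ upFun t R l := by
  unfold upFun
  have hgap : 0 < t (l / R + 1) - t (l / R) := sub_pos.mpr (hmono (Nat.lt_succ_self _))
  have hRpos : (0:ℝ) < R := by exact_mod_cast hR
  have h2 : (0:ℝ) ≤ ((l % R : ℕ) : ℝ) * (t (l / R + 1) - t (l / R)) / R :=
    div_nonneg (mul_nonneg (Nat.cast_nonneg _) hgap.le) hRpos.le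
  linarith

lemma upFun_lt (t : ℕ → ℝ) {R : ℕ} (hR : 0 < R) (hmono : StrictMono t) (l : ℕ) :
    upFun t R l < t (l / R + 1) := by
  unfold upFun
  have hgap : 0 < t (l / R + 1) - t (l / R) := sub_pos.mpr (hmono (Nat.lt_succ_self _))
  have hr : l % R < R := Nat.mod_lt l hR
  have hrR : ((l % R : ℕ) : ℝ) < (R : ℝ) := by exact_mod_cast hr
  have hRpos : (0:ℝ) < R := by exact_mod_cast hR
  have h2 : ((l % R : ℕ) : ℝ) * (t (l / R + 1) - t (l / R)) / R
      < t (l / R + 1) - t (l / R) := by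
    rw [div_lt_iff₀ hRpos]
    nlinarith
  linarith

lemma upFun_succ_le (t : ℕ → ℝ) {R : ℕ} (hR : 0 < R) (hmono : StrictMono t) (l : ℕ) :
    upFun t R (l + 1) ≤ t (l / R + 1) := by
  rw [upFun_succ t hR l]
  unfold upFun
  have hgap : 0 < t (l / R + 1) - t (l / R) := sub_pos.mpr (hmono (Nat.lt_succ_self _))
  have hr : l % R < R := Nat.mod_lt l hR
  have hrR : ((l % R : ℕ) : ℝ) + 1 ≤ (R : ℝ) := by exact_mod_cast Nat.succ_le_of_lt hr
  have hRpos : (0:ℝ) < R := by exact_mod_cast hR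
  have h2 : ((l % R : ℕ) : ℝ) * (t (l / R + 1) - t (l / R)) / R
      + (t (l / R + 1) - t (l / R)) / R ≤ t (l / R + 1) - t (l / R) := by
    rw [← add_div, div_le_iff₀ hRpos]
    nlinarith
  linarith

lemma upFun_pos_gap (t : ℕ → ℝ) {R : ℕ} (hR : 0 < R) (hmono : StrictMono t) (l : ℕ) :
    upFun t R l < upFun t R (l + 1) := by
  rw [upFun_succ t hR l]
  have hgap : 0 < t (l / R + 1) - t (l / R) := sub_pos.mpr (hmono (Nat.lt_succ_self _))
  have hRpos : (0:ℝ) < R := by exact_mod_cast hR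
  have : 0 < (t (l / R + 1) - t (l / R)) / R := by positivity
  linarith

end NiceGlue

/-- Every nice closed curve in the punctured sphere is not nullhomotopic. -/
theorem stmt11 (k : ℕ) (hk : 3 ≤ k) (γ : C(Circle, PSub k))
    (m : ℕ) (t : ℕ → ℝ) (σ : ℕ → Fin k) (h : IsNice k γ m t σ) :
    ¬ IsNullCurve γ := by
  classical
  rintro ⟨x, hxh⟩
  obtain ⟨F⟩ := hxh
  obtain ⟨b, halt⟩ := h.alternate
  open NiceComb NiceGeo NiceGlue in
  -- the homotopy as a function on ℝ × ℝ
  set G : ℝ × ℝ → PSub k := fun p =>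
    F (Set.projIcc 0 1 zero_le_one p.1, Circle.exp p.2) with hGdef
  have hGcont : Continuous G := by
    apply F.continuous.comp
    exact (continuous_projIcc.comp continuous_fst).prodMk
      (Circle.exp.continuous.comp continuous_snd)
  have hproj0 : Set.projIcc (0:ℝ) 1 zero_le_one 0 = 0 := by
    apply Subtype.ext
    simp [Set.projIcc]
  have hproj1 : Set.projIcc (0:ℝ) 1 zero_le_one 1 = 1 := by
    apply Subtype.ext
    simp [Set.projIcc]
  have hG0 : ∀ u, G (0, u) = γ (Circle.exp u) := by
    intro u
    show F (Set.projIcc (0:ℝ) 1 zero_le_one 0, Circle.exp u) = _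
    rw [hproj0]
    exact F.apply_zero _
  have hG1 : ∀ u, G (1, u) = x := by
    intro u
    show F (Set.projIcc (0:ℝ) 1 zero_le_one 1, Circle.exp u) = _
    rw [hproj1]
    exact F.apply_one _
  have hGper : ∀ s u, G (s, u + 2*π) = G (s, u) := by
    intro s u
    show F (_, Circle.exp (u + 2*π)) = F (_, Circle.exp u)
    rw [Circle.periodic_exp u]
  -- compact square and Lebesgue number
  set Q : Set (ℝ × ℝ) := Set.Icc 0 1 ×ˢ Set.Icc (t 0) (t 0 + 2*π) with hQdef
  have hQc : IsCompact Q := IsCompact.prod isCompact_Icc isCompact_Icc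
  have hKc : IsCompact (G '' Q) := hQc.image hGcont
  obtain ⟨δ, hδpos, hδ⟩ := lebesgue_number_lemma_of_metric hKc
    (fun c => isOpen_OC c) (fun y _ => Set.mem_iUnion.mpr (cover hk y))
  obtain ⟨ε, hεpos, hε⟩ := (Metric.uniformContinuousOn_iff.mp
    (hQc.uniformContinuousOn_of_continuous hGcont.continuousOn)) δ hδpos
  -- grid sizes
  obtain ⟨N0, hN0⟩ := exists_nat_one_div_lt hεpos
  set N := N0 + 1 with hNdef
  have hNpos : 0 < N := Nat.succ_pos _
  have hNR : (0:ℝ) < N := by exact_mod_cast hNpos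
  have hN : (1:ℝ)/N < ε := by exact_mod_cast hN0
  have hm2 : 0 < 2*m := by have := h.m_pos; omega
  have hrne : (Finset.range (2*m)).Nonempty := ⟨0, Finset.mem_range.mpr hm2⟩
  obtain ⟨R0, hR0⟩ := exists_nat_gt
    ((Finset.range (2*m)).sup' hrne (fun i => t (i+1) - t i) / ε)
  set R := R0 + 1 with hRdef
  have hRpos : 0 < R := Nat.succ_pos _
  have hRR : (0:ℝ) < R := by exact_mod_cast hRpos
  have hgapR : ∀ i, i < 2*m → (t (i+1) - t i)/R < ε := by
    intro i hi
    have h1 : t (i+1) - t i ≤ (Finset.range (2*m)).sup' hrne (fun i => t (i+1) - t i) :=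
      Finset.le_sup' (f := fun i => t (i+1) - t i) (Finset.mem_range.mpr hi)
    have h2 : (Finset.range (2*m)).sup' hrne (fun i => t (i+1) - t i) < R * ε := by
      have h3 : (R0:ℝ) ≤ R := by exact_mod_cast Nat.le_succ _
      rw [div_lt_iff₀ hεpos] at hR0
      nlinarith
    rw [div_lt_iff₀ hRR]
    nlinarith
  set M := 2*m*R with hMdef
  have hMpos : 0 < M := Nat.mul_pos hm2 hRpos
  set up : ℕ → ℝ := upFun t R with hupdef
  set sp : ℕ → ℝ := fun i => (i:ℝ)/N with hspdef
  set cell : ℕ → ℕ → Set (ℝ × ℝ) :=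
    fun i l => Set.Icc (sp i) (sp (i+1)) ×ˢ Set.Icc (up l) (up (l+1)) with hcelldef
  have hmono := h.mono
  have hup0 : up 0 = t 0 := by
    have := upFun_left t hRpos 0
    simpa [hupdef] using this
  have hupM : up M = t (2*m) := by
    have := upFun_left t hRpos (2*m)
    simpa [hupdef, hMdef] using this
  have htM : t (2*m) = t 0 + 2*π := by
    have := h.t_periodic 0
    simpa using this
  have hdivlt : ∀ l, l < M → l / R < 2*m := by
    intro l hl
    exact (Nat.div_lt_iff_lt_mul hRpos).mpr (by omega)
  have hupge : ∀ l, t (l/R) ≤ up l := fun l => upFun_ge t hRpos hmono l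
  have huplt : ∀ l, up l < t (l/R + 1) := fun l => upFun_lt t hRpos hmono l
  have hupsle : ∀ l, up (l+1) ≤ t (l/R + 1) := fun l => upFun_succ_le t hRpos hmono l
  have hupgap : ∀ l, up l < up (l+1) := fun l => upFun_pos_gap t hRpos hmono l
  have hsp01 : ∀ i : ℕ, sp i ≤ sp (i+1) := by
    intro i
    simp only [hspdef]
    push_cast
    gcongr
    linarith
  have hsp0 : sp 0 = 0 := by simp [hspdef]
  have hspN : sp N = 1 := by
    simp only [hspdef]
    field_simp
  have hspgap : ∀ i : ℕ, sp (i+1) - sp i = 1/N := by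
    intro i
    simp only [hspdef]
    push_cast
    field_simp
    ring
  have hspnn : ∀ i : ℕ, 0 ≤ sp i := by
    intro i
    simp only [hspdef]
    positivity
  have hsple1 : ∀ i : ℕ, i ≤ N → sp i ≤ 1 := by
    intro i hi
    simp only [hspdef]
    rw [div_le_one hNR]
    exact_mod_cast hi
  -- cells lie in Q
  have hcellQ : ∀ i l, i < N → l < M → cell i l ⊆ Q := by
    rintro i l hi hl ⟨p1, p2⟩ ⟨⟨hp1a, hp1b⟩, hp2a, hp2b⟩
    refine ⟨⟨le_trans (hspnn i) hp1a, le_trans hp1b (hsple1 (i+1) hi)⟩, ?_, ?_⟩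
    · calc t 0 ≤ t (l/R) := hmono.monotone (Nat.zero_le _)
      _ ≤ up l := hupge l
      _ ≤ p2 := hp2a
    · calc p2 ≤ up (l+1) := hp2b
      _ ≤ t (l/R + 1) := hupsle l
      _ ≤ t (2*m) := hmono.monotone (hdivlt l hl)
      _ = t 0 + 2*π := htM
  -- corners are in cells
  have hcorner : ∀ i l, (sp i, up l) ∈ cell i l := by
    intro i l
    exact ⟨⟨le_refl _, hsp01 i⟩, le_refl _, (hupgap l).le⟩
  -- choose colors
  have hcolex : ∀ i l, ∃ c, i < N → l < M → ∀ p ∈ cell i l, G p ∈ OC k c := by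
    intro i l
    by_cases hil : i < N ∧ l < M
    · obtain ⟨hi, hl⟩ := hil
      have hpQ : (sp i, up l) ∈ Q := hcellQ i l hi hl (hcorner i l)
      obtain ⟨c, hc⟩ := hδ (G (sp i, up l)) ⟨_, hpQ, rfl⟩
      refine ⟨c, fun _ _ p hp => hc ?_⟩
      rw [Metric.mem_ball]
      apply hε p (hcellQ i l hi hl hp) _ hpQ
      obtain ⟨⟨ha1, ha2⟩, hb1, hb2⟩ := hp
      rw [Prod.dist_eq]
      apply max_lt
      · rw [Real.dist_eq, abs_lt]
        constructor
        · linarith [hspgap i, hN, hεpos]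
        · have := hspgap i
          linarith
      · rw [Real.dist_eq, abs_lt]
        have hg := hgapR (l/R) (hdivlt l hl)
        have hsucc : up (l+1) = up l + (t (l/R + 1) - t (l/R))/R := upFun_succ t hRpos l
        constructor
        · linarith [hεpos]
        · linarith
    · exact ⟨Sum.inl true, fun h1 h2 => absurd ⟨h1, h2⟩ hil⟩
  choose col hcol using hcolex
  -- compatibility
  set cp : (Bool ⊕ Fin k) → (Bool ⊕ Fin k) → Prop :=
    fun c c' => ∃ y : PSub k, y ∈ OC k c ∧ y ∈ OC k c' with hcpdef
  have cpl : ∀ h1 h2, cp (.inl h1) (.inl h2) → h1 = h2 := by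
    rintro h1 h2 ⟨y, hy1, hy2⟩
    exact hemi_disjoint hy1 hy2
  have cpr : ∀ j j', cp (.inr j) (.inr j') → j = j' := by
    rintro j j' ⟨y, hy1, hy2⟩
    exact lune_disjoint hk hy1 hy2
  have hshare : ∀ i l i' l', i < N → l < M → i' < N → l' < M →
      (∃ p p', p ∈ cell i l ∧ p' ∈ cell i' l' ∧ G p = G p') →
      cp (col i l) (col i' l') := by
    rintro i l i' l' hi hl hi' hl' ⟨p, p', hp, hp', hee⟩
    exact ⟨G p, hcol i l hi hl p hp, hee ▸ hcol i' l' hi' hl' p' hp'⟩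
  
  -- compatibility instances
  have compatH : ∀ i l, i < N → l + 1 < M → cp (col i l) (col i (l+1)) := by
    intro i l hi hl
    apply hshare i l i (l+1) hi (by omega) hi hl
    exact ⟨(sp i, up (l+1)), (sp i, up (l+1)),
      ⟨⟨le_refl _, hsp01 i⟩, (hupgap l).le, le_refl _⟩, hcorner i (l+1), rfl⟩
  have compatV : ∀ i l, i + 1 < N → l < M → cp (col i l) (col (i+1) l) := by
    intro i l hi hl
    apply hshare i l (i+1) l (by omega) hl hi hl
    exact ⟨(sp (i+1), up l), (sp (i+1), up l),
      ⟨⟨hsp01 i, le_refl _⟩, le_refl _, (hupgap l).le⟩, hcorner (i+1) l, rfl⟩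
  have compatD : ∀ i l, i + 1 < N → l + 1 < M → cp (col i l) (col (i+1) (l+1)) := by
    intro i l hi hl
    apply hshare i l (i+1) (l+1) (by omega) (by omega) hi hl
    exact ⟨(sp (i+1), up (l+1)), (sp (i+1), up (l+1)),
      ⟨⟨hsp01 i, le_refl _⟩, (hupgap l).le, le_refl _⟩, hcorner (i+1) (l+1), rfl⟩
  have compatA : ∀ i l, i + 1 < N → l + 1 < M → cp (col (i+1) l) (col i (l+1)) := by
    intro i l hi hl
    apply hshare (i+1) l i (l+1) hi (by omega) (by omega) hl
    exact ⟨(sp (i+1), up (l+1)), (sp (i+1), up (l+1)),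
      ⟨⟨le_refl _, hsp01 (i+1)⟩, (hupgap l).le, le_refl _⟩,
      ⟨⟨hsp01 i, le_refl _⟩, le_refl _, (hupgap (l+1)).le⟩, rfl⟩
  have hM1 : M - 1 + 1 = M := by omega
  have hupMM : up M = up 0 + 2*π := by rw [hup0, hupM, htM]
  have compatWgen : ∀ i i' s, i < N → i' < N → s ∈ Set.Icc (sp i) (sp (i+1)) →
      s ∈ Set.Icc (sp i') (sp (i'+1)) → cp (col i (M-1)) (col i' 0) := by
    intro i i' s hi hi' hs hs'
    apply hshare i (M-1) i' 0 hi (by omega) hi' (by omega)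
    refine ⟨(s, up M), (s, up 0), ⟨hs, ?_, ?_⟩,
      ⟨hs', le_refl _, (hupgap 0).le⟩, ?_⟩
    · conv_rhs => rw [← hM1]
      exact (hupgap (M-1)).le
    · rw [hM1]
    · rw [hupMM, hGper]
  -- the tree walk
  set vst : NiceComb.V k → ℕ → NiceComb.V k := fun v0 =>
    natIter (fun i' v => st b v (col (i'+1) 0)) v0 with hvstdef
  set vs : ℕ → NiceComb.V k := vst (false, [σ 0]) with hvsdef
  set row : ℕ → ℕ → NiceComb.V k :=
    fun i => natIter (fun l v => st b v (col i (l+1))) (vs i) with hrowdef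
  have hrow0 : ∀ i, row i 0 = vs i := fun i => rfl
  have hrowS : ∀ i l, row i (l+1) = st b (row i l) (col i (l+1)) := fun i l => rfl
  have hvs0 : vs 0 = (false, [σ 0]) := rfl
  have hvsS : ∀ i, vs (i+1) = st b (vs i) (col (i+1) 0) := fun i => rfl
  -- color forcing on the bottom row
  have hbcell : ∀ l u, l < M → u ∈ Set.Icc (up l) (up (l+1)) → G (0, u) ∈ OC k (col 0 l) := by
    intro l u hl hu
    refine hcol 0 l hNpos hl (0, u) ⟨⟨?_, ?_⟩, hu⟩
    · rw [hsp0]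
    · rw [← hsp0]; exact hsp01 0
  have hmod0up : ∀ l, l % R = 0 → up l = t (l / R) := by
    intro l hl
    simp [hupdef, upFun, hl]
  have hCF1 : ∀ l, l < M → l % R = 0 → col 0 l = .inr (σ (l / R)) := by
    intro l hl hmod
    have hmem : G (0, up l) ∈ OC k (col 0 l) :=
      hbcell l (up l) hl ⟨le_refl _, (hupgap l).le⟩
    rw [hmod0up l hmod, hG0] at hmem
    exact arc_color hk (h.code (l/R)) _ hmem
  have hsuccdiv : ∀ l, (l+1) % R = 0 → (l+1)/R = l/R + 1 := by
    intro l hml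
    have hr : l % R < R := Nat.mod_lt l hRpos
    have hl2 := Nat.div_add_mod l R
    rcases eq_or_lt_of_le (Nat.succ_le_of_lt hr) with he | hlt
    · have h1 : l + 1 = (l / R + 1) * R := by
        have h2 : (l / R + 1) * R = R * (l / R) + R := by ring
        rw [h2]
        conv_lhs => rw [← hl2]
        rw [Nat.add_assoc]
        congr 1
      rw [h1, Nat.mul_div_cancel _ hRpos]
    · exfalso
      have h1 : l + 1 = (l % R + 1) + R * (l / R) := by omega
      rw [h1, Nat.add_mul_mod_self_left, Nat.mod_eq_of_lt hlt] at hml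
      omega
  have hCF2 : ∀ l, l < M → (l+1) % R = 0 → col 0 l = .inr (σ (l/R + 1)) := by
    intro l hl hmod
    have hmem : G (0, up (l+1)) ∈ OC k (col 0 l) :=
      hbcell l _ hl ⟨(hupgap l).le, le_refl _⟩
    have e1 : up (l+1) = t (l/R + 1) := by rw [hmod0up (l+1) hmod, hsuccdiv l hmod]
    rw [e1, hG0] at hmem
    exact arc_color hk (h.code (l/R + 1)) _ hmem
  have hCF3 : ∀ l hb', l < M → col 0 l = .inl hb' → hb' = (if Even (l/R) then b else !b) := by
    intro l hb' hl hcoleq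
    have hgl := hupgap l
    have h1 : t (l/R) < (up l + up (l+1))/2 := lt_of_le_of_lt (hupge l) (by linarith)
    have h2 : (up l + up (l+1))/2 < t (l/R + 1) := by
      have := hupsle l
      linarith
    have hmem : G (0, (up l + up (l+1))/2) ∈ OC k (col 0 l) :=
      hbcell l _ hl ⟨by linarith, by linarith⟩
    rw [hG0, hcoleq] at hmem
    exact hemi_color (halt (l/R) _ h1 h2) hmem
  have hemW : ∀ i, hem b (Wlist σ i) = (if Even i then b else !b) := by
    intro i
    unfold NiceComb.hem
    rw [Wlist_len]
    rcases Nat.even_or_odd i with he | ho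
    · simp [he, Nat.even_add_one, Nat.not_even_iff_odd]
    · simp [Nat.even_add_one, Nat.not_even_iff_odd.mpr ho, Nat.not_odd_iff_even,
        Nat.not_even_iff_odd]
  have hcol00 : col 0 0 = .inr (σ 0) := by
    have := hCF1 0 hMpos (Nat.zero_mod R)
    simpa using this
  -- row start invariants
  have hvsI : ∀ i, i < N → Honest (vs i) ∧ piV b (vs i) = col i 0 := by
    intro i hi
    induction i with
    | zero =>
      rw [hvs0]
      refine ⟨⟨fun _ => by simp, List.isChain_singleton _⟩, ?_⟩
      rw [piV_f, hcol00]
    | succ i ih =>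
      obtain ⟨hh, hp⟩ := ih (by omega)
      refine ⟨?_, ?_⟩
      · rw [hvsS]; exact honest_st hh
      · rw [hvsS]
        apply piV_st b cpl cpr hh
        rw [hp]
        exact compatV i 0 hi hMpos
  have hrowI : ∀ i, i < N → ∀ l, l < M → Honest (row i l) ∧ piV b (row i l) = col i l := by
    intro i hi l
    induction l with
    | zero =>
      intro _
      rw [hrow0]
      exact hvsI i hi
    | succ l ih =>
      intro hl
      obtain ⟨hh, hp⟩ := ih (by omega)
      refine ⟨?_, ?_⟩
      · rw [hrowS]; exact honest_st hh
      · rw [hrowS]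
        apply piV_st b cpl cpr hh
        rw [hp]
        exact compatH i l hi hl
  have hrel : ∀ i, i + 1 < N → ∀ l, l < M → REL b (row i l) (row (i+1) l) := by
    intro i hi l
    induction l with
    | zero =>
      intro _
      rw [hrow0, hrow0, hvsS]
      apply back b cpl cpr (hvsI i (by omega)).1
      rw [(hvsI i (by omega)).2]
      exact compatV i 0 hi hMpos
    | succ l ih =>
      intro hl
      have hlp : l < M := by omega
      have h1 := hrowI i (by omega) l hlp
      have h2 := hrowI (i+1) hi l hlp
      rw [hrowS, hrowS]
      apply step b cpl cpr h1.1 h2.1 (ih hlp)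
      · rw [h1.2]; exact compatH i l (by omega) hl
      · rw [h1.2]; exact compatD i l hi hl
      · rw [h2.2]; exact compatA i l hi hl
      · rw [h2.2]; exact compatH (i+1) l hi hl
      · exact compatV i (l+1) hi hl
  
  have hMm : M - 1 < M := by omega
  have hNm : N - 1 < N := by omega
  have hN1 : N - 1 + 1 = N := by omega
  -- closedness propagates downward
  have hwrap : ∀ i, i + 1 < N →
      REL b (st b (row i (M-1)) (col i 0)) (st b (row (i+1) (M-1)) (col (i+1) 0)) := by
    intro i hi
    have h1 := hrowI i (by omega) (M-1) hMm
    have h2 := hrowI (i+1) hi (M-1) hMm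
    apply step b cpl cpr h1.1 h2.1 (hrel i hi (M-1) hMm)
    · rw [h1.2]
      exact compatWgen i i (sp i) (by omega) (by omega)
        ⟨le_refl _, hsp01 i⟩ ⟨le_refl _, hsp01 i⟩
    · rw [h1.2]
      exact compatWgen i (i+1) (sp (i+1)) (by omega) hi
        ⟨hsp01 i, le_refl _⟩ ⟨le_refl _, hsp01 (i+1)⟩
    · rw [h2.2]
      exact compatWgen (i+1) i (sp (i+1)) hi (by omega)
        ⟨le_refl _, hsp01 (i+1)⟩ ⟨hsp01 i, le_refl _⟩
    · rw [h2.2]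
      exact compatWgen (i+1) (i+1) (sp (i+1)) hi hi
        ⟨le_refl _, hsp01 (i+1)⟩ ⟨le_refl _, hsp01 (i+1)⟩
    · exact compatV i 0 hi hMpos
  have hprop : ∀ i, i + 1 < N →
      st b (row (i+1) (M-1)) (col (i+1) 0) = row (i+1) 0 →
      st b (row i (M-1)) (col i 0) = row i 0 := by
    intro i hi hcl
    have hw := hwrap i hi
    rw [hcl] at hw
    have h0 := hrel i hi 0 hMpos
    have e1 := hw.2
    have e2 := h0.2
    have hpi1 : piV b (st b (row i (M-1)) (col i 0)) = col i 0 := by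
      apply piV_st b cpl cpr (hrowI i (by omega) (M-1) hMm).1
      rw [(hrowI i (by omega) (M-1) hMm).2]
      exact compatWgen i i (sp i) (by omega) (by omega)
        ⟨le_refl _, hsp01 i⟩ ⟨le_refl _, hsp01 i⟩
    have hpi2 : piV b (row i 0) = col i 0 := (hrowI i (by omega) 0 hMpos).2
    rw [hpi1] at e1
    rw [hpi2] at e2
    rw [e1, ← e2]
  -- the top row is closed
  have htop : ∀ l l', l < M → l' < M → cp (col (N-1) l) (col (N-1) l') := by
    intro l l' hl hl'
    apply hshare (N-1) l (N-1) l' hNm hl hNm hl'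
    have hmem : (1:ℝ) ∈ Set.Icc (sp (N-1)) (sp (N-1+1)) := by
      rw [hN1, hspN]
      exact ⟨hsple1 (N-1) (by omega), le_refl _⟩
    refine ⟨(1, up l), (1, up l'), ⟨hmem, le_refl _, (hupgap l).le⟩,
      ⟨hmem, le_refl _, (hupgap l').le⟩, ?_⟩
    rw [hG1, hG1]
  have htoplift : ∀ l, l < M → row (N-1) l = st b (vs (N-1)) (col (N-1) l) := by
    intro l
    induction l with
    | zero =>
      intro _
      rw [hrow0, ← (hvsI (N-1) hNm).2, st_piV (hvsI (N-1) hNm).1]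
    | succ l ih =>
      intro hl
      rw [hrowS, ih (by omega)]
      apply trans_st b cpl cpr (hvsI (N-1) hNm).1
      · rw [(hvsI (N-1) hNm).2]; exact htop 0 l hMpos (by omega)
      · rw [(hvsI (N-1) hNm).2]; exact htop 0 (l+1) hMpos hl
      · exact htop l (l+1) (by omega) hl
  have hclosedTop : st b (row (N-1) (M-1)) (col (N-1) 0) = row (N-1) 0 := by
    rw [htoplift (M-1) hMm]
    have e : st b (st b (vs (N-1)) (col (N-1) (M-1))) (col (N-1) 0)
        = st b (vs (N-1)) (col (N-1) 0) := by
      apply trans_st b cpl cpr (hvsI (N-1) hNm).1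
      · rw [(hvsI (N-1) hNm).2]; exact htop 0 (M-1) hMpos hMm
      · rw [(hvsI (N-1) hNm).2]; exact htop 0 0 hMpos hMpos
      · exact htop (M-1) 0 hMm hMpos
    rw [e, hrow0, ← (hvsI (N-1) hNm).2, st_piV (hvsI (N-1) hNm).1]
  -- the bottom row ball invariant
  have hball : ∀ l, l < M → (row 0 l = (true, Wlist σ (l/R)) ∨
      row 0 l = (false, Wlist σ (l/R)) ∨
      ∃ j, j ≠ σ (l/R) ∧ row 0 l = (false, j :: Wlist σ (l/R))) := by
    intro l
    induction l with
    | zero =>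
      intro _
      right; left
      rw [hrow0, hvs0, Nat.zero_div]
      rfl
    | succ l ih =>
      intro hl
      have hlp : l < M := by omega
      have hih := ih hlp
      by_cases hmd : (l+1) % R = 0
      · -- crossing a meridian
        have hdiv : (l+1)/R = l/R + 1 := hsuccdiv l hmd
        have hc2 := hCF2 l hlp hmd
        have hpi := (hrowI 0 hNpos l hlp).2
        have hadj : σ (l/R) ≠ σ (l/R + 1) := h.adjacent (l/R)
        -- identify row 0 l
        have hrowl : row 0 l = (false, σ (l/R + 1) :: Wlist σ (l/R)) := by
          rcases hih with h1 | h1 | ⟨j, hj, h1⟩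
          · rw [h1, piV_t, hc2] at hpi
            exact absurd hpi (by simp)
          · rw [h1] at hpi
            obtain ⟨w, hw⟩ := Wlist_cons σ (l/R)
            rw [hw, piV_f, hc2] at hpi
            simp only [Sum.inr.injEq] at hpi
            exact absurd hpi hadj
          · rw [h1, piV_f, hc2] at hpi
            simp only [Sum.inr.injEq] at hpi
            rw [h1, hpi]
        have hc1 : col 0 (l+1) = .inr (σ (l/R + 1)) := by
          have := hCF1 (l+1) hl hmd
          rw [hdiv] at this
          exact this
        rw [hrowS, hrowl, hc1, st_f_inr, hdiv]
        right; left
        rfl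
      · -- within a block
        have hdiv : (l+1)/R = l/R := by
          have hr : l % R < R := Nat.mod_lt l hRpos
          rcases eq_or_lt_of_le (Nat.succ_le_of_lt hr) with he | hlt
          · exfalso
            apply hmd
            have h1 : l + 1 = (l / R + 1) * R := by
              have h2 : (l / R + 1) * R = R * (l / R) + R := by ring
              rw [h2]
              conv_lhs => rw [← Nat.div_add_mod l R]
              rw [Nat.add_assoc]
              congr 1
            rw [h1]
            exact Nat.mul_mod_left _ _
          · have hl2 := Nat.div_add_mod l R
            have h1 : l + 1 = (l % R + 1) + R * (l / R) := by omega
            rw [h1, Nat.add_mul_div_left _ _ hRpos, Nat.div_eq_of_lt hlt, Nat.zero_add]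
        rw [hrowS, hdiv]
        obtain ⟨w, hw⟩ := Wlist_cons σ (l/R)
        rcases hcc : col 0 (l+1) with hb' | j
        · -- a hemisphere colour
          have hbeq : hb' = (if Even ((l+1)/R) then b else !b) := hCF3 (l+1) hb' hl hcc
          rw [hdiv] at hbeq
          have hbW : hb' = hem b (Wlist σ (l/R)) := by rw [hemW, hbeq]
          rcases hih with h1 | h1 | ⟨j, hj, h1⟩
          · rw [h1, st_t_inl]
            left; rfl
          · rw [h1, hw, st_f_inl]
            rw [if_pos (by rw [hbW, hw])]
            left
            rfl
          · rw [h1, st_f_inl]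
            rw [if_neg ?_]
            · left; rfl
            · rw [hbW]
              rw [show (j :: Wlist σ (l/R)) = j :: Wlist σ (l/R) from rfl, hem_cons]
              cases hem b (Wlist σ (l/R)) <;> simp
        · -- a lune colour
          rcases hih with h1 | h1 | ⟨j', hj', h1⟩
          · rw [h1, st_t_inr]
            by_cases hjh : j = σ (l/R)
            · rw [if_pos (by rw [hw, hjh]; simp)]
              right; left; rfl
            · rw [if_neg (by
                rw [hw]
                simp only [List.head?_cons, Option.some.injEq]
                intro hcon
                exact hjh hcon.symm)]
              right; right
              exact ⟨j, hjh, rfl⟩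
          · rw [h1, st_f_inr]
            right; left; rfl
          · rw [h1, st_f_inr]
            right; right
            exact ⟨j', hj', rfl⟩
  -- bottom row is not closed
  have hMdiv : (M-1)/R = 2*m - 1 := by
    have h1 : R * (2*m - 1) + R = 2*m*R := by
      have h1 : R * (2*m - 1 + 1) = R * (2*m - 1) + R := Nat.mul_succ R (2*m - 1)
      rw [show 2*m - 1 + 1 = 2*m from by omega, Nat.mul_comm R (2*m)] at h1
      omega
    have he2 : M - 1 = (R-1) + R*(2*m-1) := by omega
    rw [he2, Nat.add_mul_div_left _ _ hRpos, Nat.div_eq_of_lt (by omega), Nat.zero_add]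
  have hMmod : ((M-1)+1) % R = 0 := by
    rw [hM1, hMdef]
    exact Nat.mul_mod_left _ _
  have h2m1 : 2*m - 1 + 1 = 2*m := by omega
  have hcolM : col 0 (M-1) = .inr (σ (2*m)) := by
    have hc := hCF2 (M-1) hMm (by rw [← hM1] at hMmod; exact hMmod)
    rw [hMdiv, h2m1] at hc
    exact hc
  have hb2 := hball (M-1) hMm
  rw [hMdiv] at hb2
  have hpiM := (hrowI 0 hNpos (M-1) hMm).2
  have hadj2 : σ (2*m - 1) ≠ σ (2*m) := by
    have := h.adjacent (2*m-1)
    rwa [h2m1] at this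
  have hrowM : row 0 (M-1) = (false, σ (2*m) :: Wlist σ (2*m-1)) := by
    rcases hb2 with h1 | h1 | ⟨j, hj, h1⟩
    · rw [h1, piV_t, hcolM] at hpiM
      exact absurd hpiM (by simp)
    · obtain ⟨w, hw⟩ := Wlist_cons σ (2*m-1)
      rw [h1, hw, piV_f, hcolM] at hpiM
      simp only [Sum.inr.injEq] at hpiM
      exact absurd hpiM hadj2
    · rw [h1, piV_f, hcolM] at hpiM
      simp only [Sum.inr.injEq] at hpiM
      rw [h1, hpiM]
  have hnotclosed0 : ¬ (st b (row 0 (M-1)) (col 0 0) = row 0 0) := by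
    rw [hrowM, hcol00, st_f_inr, hrow0, hvs0]
    intro hcon
    have hlists : σ (2*m) :: Wlist σ (2*m-1) = [σ 0] := congrArg Prod.snd hcon
    have hlen := congrArg List.length hlists
    rw [List.length_cons, Wlist_len] at hlen
    simp only [List.length_cons, List.length_nil] at hlen
    omega
  have hall : ∀ i, i < N → ¬ (st b (row i (M-1)) (col i 0) = row i 0) := by
    intro i
    induction i with
    | zero => exact fun _ => hnotclosed0
    | succ i ih =>
      intro hi hcl
      exact ih (by omega) (hprop i hi hcl)
  exact hall (N-1) hNm hclosedTop
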